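/- Let N be a Poisson random variable with parameter λ satisfying ℓ ≤ λ ≤ L for constants 0 < ℓ ≤ L, let r ∈ ℝ with ℓ ≤ λ + r and |r|/λ ≤ 1/2, and set ln L = N ln((λ+r)/λ) − r. Then E[(ln L)²] ≤ (25/16)·r²/ℓ + r⁴/(4ℓ²). -/

import Mathlib

open Real Set

-- x - x^2/2 ≤ log(1+x) for x ≥ 0
lemma logA {x : ℝ} (hx : 0 ≤ x) : x - x^2/2 ≤ Real.log (1+x) := by
  have mono : MonotoneOn (fun y : ℝ => Real.log (1+y) - (y - y^2/2)) (Icc 0 x) := by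
    apply monotoneOn_of_hasDerivWithinAt_nonneg (convex_Icc 0 x)
      (f' := fun y => 1/(1+y) - (1 - y))
    · apply ContinuousOn.sub
      · apply ContinuousOn.log (by fun_prop)
        intro y hy; have := hy.1; positivity
      · fun_prop
    · intro y hy
      rw [interior_Icc] at hy
      have hy0 : (1:ℝ) + y ≠ 0 := by have := hy.1; positivity
      have h1 : HasDerivAt (fun y : ℝ => Real.log (1+y)) (1/(1+y)) y := by
        have := (((hasDerivAt_id y).const_add 1).log hy0)
        simpa using this
      have h2 : HasDerivAt (fun y : ℝ => y - y^2/2) (1 - y) y := by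
        have := (hasDerivAt_id y).sub ((hasDerivAt_pow 2 y).div_const 2)
        exact this.congr_deriv (by ring)
      exact (h1.sub h2).hasDerivWithinAt
    · intro y hy
      rw [interior_Icc] at hy
      have hy1 : (0:ℝ) < 1 + y := by have := hy.1; linarith
      have : 1 - y ≤ 1/(1+y) := by
        rw [le_div_iff₀ hy1]; nlinarith [sq_nonneg y]
      linarith
  have := mono (left_mem_Icc.2 hx) (right_mem_Icc.2 hx) hx
  simpa using this

-- x - log(1+x) ≤ x^2/(2*(1+x)) for -1 < x ≤ 0
lemma logB {x : ℝ} (hx1 : -1 < x) (hx2 : x ≤ 0) :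
    x - Real.log (1+x) ≤ x^2/(2*(1+x)) := by
  have anti : AntitoneOn
      (fun y : ℝ => y^2/(2*(1+y)) - (y - Real.log (1+y))) (Icc x 0) := by
    apply antitoneOn_of_hasDerivWithinAt_nonpos (convex_Icc x 0)
      (f' := fun y => (2*y*(2*(1+y)) - y^2*2)/(2*(1+y))^2 - (1 - 1/(1+y)))
    · apply ContinuousOn.sub
      · apply ContinuousOn.div (by fun_prop) (by fun_prop)
        intro y hy; have := hy.1; intro h; nlinarith
      · apply ContinuousOn.sub (by fun_prop)
        apply ContinuousOn.log (by fun_prop)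
        intro y hy; have := hy.1; intro h; nlinarith
    · intro y hy
      rw [interior_Icc] at hy
      have hy1 : (0:ℝ) < 1 + y := by have := hy.1; linarith
      have h1 : HasDerivAt (fun y : ℝ => y^2/(2*(1+y)))
          ((2*y*(2*(1+y)) - y^2*2)/(2*(1+y))^2) y := by
        have ha : HasDerivAt (fun y : ℝ => y^2) (2*y) y := by
          simpa using hasDerivAt_pow 2 y
        have hb : HasDerivAt (fun y : ℝ => 2*(1+y)) 2 y := by
          simpa using ((hasDerivAt_id y).const_add 1).const_mul 2
        exact ha.div hb (by positivity)
      have h2 : HasDerivAt (fun y : ℝ => y - Real.log (1+y)) (1 - 1/(1+y)) y := by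
        have hl : HasDerivAt (fun y : ℝ => Real.log (1+y)) (1/(1+y)) y := by
          simpa using (((hasDerivAt_id y).const_add 1).log (ne_of_gt hy1))
        exact (hasDerivAt_id y).sub hl
      exact (h1.sub h2).hasDerivWithinAt
    · intro y hy
      rw [interior_Icc] at hy
      have hy1 : (0:ℝ) < 1 + y := by have := hy.1; linarith
      have e : (2*y*(2*(1+y)) - y^2*2)/(2*(1+y))^2 - (1 - 1/(1+y))
          = -y^2/(2*(1+y)^2) := by field_simp; ring
      rw [e]
      have : (0:ℝ) < 2*(1+y)^2 := by positivity
      have : -y^2 ≤ 0 := by nlinarith [sq_nonneg y]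
      exact div_nonpos_of_nonpos_of_nonneg this (by positivity)
  have := anti (left_mem_Icc.2 hx2) (right_mem_Icc.2 hx2) hx2
  simp only [Real.log_one] at this
  norm_num at this
  linarith [this]

-- chi: (25/8)*x ≤ (log(1+x))^2 + 2*log(1+x) for -1 < x ≤ 0
lemma logChi {x : ℝ} (hx1 : -1 < x) (hx2 : x ≤ 0) :
    (25/8)*x ≤ (Real.log (1+x))^2 + 2*Real.log (1+x) := by
  have anti : AntitoneOn
      (fun y : ℝ => (Real.log (1+y))^2 + 2*Real.log (1+y) - (25/8)*y) (Icc x 0) := by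
    apply antitoneOn_of_hasDerivWithinAt_nonpos (convex_Icc x 0)
      (f' := fun y => 2*Real.log (1+y)*(1/(1+y)) + 2*(1/(1+y)) - 25/8)
    · have hc : ContinuousOn (fun y : ℝ => Real.log (1+y)) (Icc x 0) := by
        apply ContinuousOn.log (by fun_prop)
        intro y hy; have := hy.1; intro h; nlinarith
      fun_prop
    · intro y hy
      rw [interior_Icc] at hy
      have hy1 : (0:ℝ) < 1 + y := by have := hy.1; linarith
      have hl : HasDerivAt (fun y : ℝ => Real.log (1+y)) (1/(1+y)) y := by
        simpa using (((hasDerivAt_id y).const_add 1).log (ne_of_gt hy1))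
      have h1 : HasDerivAt (fun y : ℝ => (Real.log (1+y))^2)
          (2*Real.log (1+y)*(1/(1+y))) y := by
        have := hl.pow 2
        exact this.congr_deriv (by ring)
      have h2 : HasDerivAt (fun y : ℝ => (25/8:ℝ)*y) (25/8) y := by
        simpa using (hasDerivAt_id y).const_mul (25/8:ℝ)
      exact ((h1.add (hl.const_mul 2)).sub h2).hasDerivWithinAt
    · intro y hy
      rw [interior_Icc] at hy
      have hy1 : (0:ℝ) < 1 + y := by have := hy.1; linarith
      have hlog : Real.log (1+y) ≤ (1+y) - 1 := Real.log_le_sub_one_of_pos hy1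
      have key : 2*Real.log (1+y)*(1/(1+y)) + 2*(1/(1+y)) ≤ 2 := by
        have e : 2*Real.log (1+y)*(1/(1+y)) + 2*(1/(1+y))
            = 2*(Real.log (1+y) + 1)/(1+y) := by ring
        rw [e, div_le_iff₀ hy1]
        nlinarith
      linarith
  have := anti (left_mem_Icc.2 hx2) (right_mem_Icc.2 hx2) hx2
  simp only [Real.log_one] at this
  norm_num at this
  nlinarith [this]

-- phi: (1+x)*(log(1+x))^2 ≤ (25/16)*x^2 for -1 < x ≤ 0
lemma logPhi {x : ℝ} (hx1 : -1 < x) (hx2 : x ≤ 0) :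
    (1+x)*(Real.log (1+x))^2 ≤ (25/16)*x^2 := by
  have anti : AntitoneOn
      (fun y : ℝ => (25/16)*y^2 - (1+y)*(Real.log (1+y))^2) (Icc x 0) := by
    apply antitoneOn_of_hasDerivWithinAt_nonpos (convex_Icc x 0)
      (f' := fun y => (25/8)*y - (1*(Real.log (1+y))^2
        + (1+y)*(2*Real.log (1+y)*(1/(1+y)))))
    · have hc : ContinuousOn (fun y : ℝ => Real.log (1+y)) (Icc x 0) := by
        apply ContinuousOn.log (by fun_prop)
        intro y hy; have := hy.1; intro h; nlinarith
      fun_prop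
    · intro y hy
      rw [interior_Icc] at hy
      have hy1 : (0:ℝ) < 1 + y := by have := hy.1; linarith
      have hl : HasDerivAt (fun y : ℝ => Real.log (1+y)) (1/(1+y)) y := by
        simpa using (((hasDerivAt_id y).const_add 1).log (ne_of_gt hy1))
      have h1 : HasDerivAt (fun y : ℝ => (25/16:ℝ)*y^2) ((25/8)*y) y := by
        have := (hasDerivAt_pow 2 y).const_mul (25/16:ℝ)
        exact this.congr_deriv (by ring)
      have h2 : HasDerivAt (fun y : ℝ => (1+y)*(Real.log (1+y))^2)
          (1*(Real.log (1+y))^2 + (1+y)*(2*Real.log (1+y)*(1/(1+y)))) y := by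
        have hsq : HasDerivAt (fun y : ℝ => (Real.log (1+y))^2)
            (2*Real.log (1+y)*(1/(1+y))) y := by
          have := hl.pow 2
          exact this.congr_deriv (by ring)
        exact ((hasDerivAt_id y).const_add 1).mul hsq
      exact (h1.sub h2).hasDerivWithinAt
    · intro y hy
      rw [interior_Icc] at hy
      have hy1 : (0:ℝ) < 1 + y := by have := hy.1; linarith
      have e : (1+y)*(2*Real.log (1+y)*(1/(1+y))) = 2*Real.log (1+y) := by
        field_simp
      rw [e]  -- may fail inside lambda; try simp only
      have hchi := logChi (show -1 < y by linarith) (le_of_lt hy.2)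
      nlinarith [hchi]
  have := anti (left_mem_Icc.2 hx2) (right_mem_Icc.2 hx2) hx2
  simp only [Real.log_one] at this
  norm_num at this
  nlinarith [this]


open Real

lemma tsum0 (x : ℝ) : ∑' k : ℕ, x ^ k / (Nat.factorial k : ℝ) = Real.exp x := by
  rw [Real.exp_eq_exp_ℝ, NormedSpace.exp_eq_tsum_div]

lemma shift1 (x : ℝ) (k : ℕ) :
    ((k+1 : ℕ) : ℝ) * x ^ (k+1) / (Nat.factorial (k+1) : ℝ)
      = x * (x ^ k / (Nat.factorial k : ℝ)) := by
  have h : (Nat.factorial k : ℝ) ≠ 0 := Nat.cast_ne_zero.2 (Nat.factorial_ne_zero k)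
  rw [Nat.factorial_succ]
  push_cast
  rw [pow_succ]
  field_simp

lemma summable1 (x : ℝ) :
    Summable (fun k : ℕ => (k:ℝ) * x ^ k / (Nat.factorial k : ℝ)) := by
  rw [← summable_nat_add_iff 1]
  exact ((Real.summable_pow_div_factorial x).mul_left x).congr
    (fun k => (shift1 x k).symm)

lemma tsum1 (x : ℝ) :
    ∑' k : ℕ, (k:ℝ) * x ^ k / (Nat.factorial k : ℝ) = x * Real.exp x := by
  rw [Summable.tsum_eq_zero_add (summable1 x)]
  simp only [shift1]
  rw [tsum_mul_left, tsum0]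
  simp

lemma shift2 (x : ℝ) (k : ℕ) :
    ((k+1 : ℕ) : ℝ)^2 * x ^ (k+1) / (Nat.factorial (k+1) : ℝ)
      = x * ((k:ℝ) * x ^ k / (Nat.factorial k : ℝ) + x ^ k / (Nat.factorial k : ℝ)) := by
  have h : (Nat.factorial k : ℝ) ≠ 0 := Nat.cast_ne_zero.2 (Nat.factorial_ne_zero k)
  rw [Nat.factorial_succ]
  push_cast
  rw [pow_succ]
  field_simp
  ring

lemma summable2 (x : ℝ) :
    Summable (fun k : ℕ => (k:ℝ)^2 * x ^ k / (Nat.factorial k : ℝ)) := by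
  rw [← summable_nat_add_iff 1]
  exact (((summable1 x).add (Real.summable_pow_div_factorial x)).mul_left x).congr
    (fun k => (shift2 x k).symm)

lemma tsum2 (x : ℝ) :
    ∑' k : ℕ, (k:ℝ)^2 * x ^ k / (Nat.factorial k : ℝ)
      = (x^2 + x) * Real.exp x := by
  rw [Summable.tsum_eq_zero_add (summable2 x)]
  simp only [shift2]
  rw [tsum_mul_left, Summable.tsum_add (summable1 x) (Real.summable_pow_div_factorial x),
    tsum0, tsum1]
  simp
  ring

lemma poisson_sq (lam c r : ℝ) :
    ∑' k : ℕ, (Real.exp (-lam) * lam ^ k / (Nat.factorial k : ℝ)) *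
      ((k : ℝ) * c - r) ^ 2
    = lam * c^2 + (lam * c - r)^2 := by
  have key : ∀ k : ℕ, (Real.exp (-lam) * lam ^ k / (Nat.factorial k : ℝ)) *
      ((k : ℝ) * c - r) ^ 2
      = Real.exp (-lam) * (c^2 * ((k:ℝ)^2 * lam ^ k / (Nat.factorial k : ℝ))
        + ((-(2*c*r)) * ((k:ℝ) * lam ^ k / (Nat.factorial k : ℝ))
        + r^2 * (lam ^ k / (Nat.factorial k : ℝ)))) := by
    intro k; ring
  simp only [key]
  rw [tsum_mul_left]
  rw [Summable.tsum_add ((summable2 lam).mul_left _)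
    (((summable1 lam).mul_left _).add ((Real.summable_pow_div_factorial lam).mul_left _))]
  rw [Summable.tsum_add ((summable1 lam).mul_left _)
    ((Real.summable_pow_div_factorial lam).mul_left _)]
  rw [tsum_mul_left, tsum_mul_left, tsum_mul_left, tsum0, tsum1, tsum2]
  have he : Real.exp (-lam) * Real.exp lam = 1 := by
    rw [← Real.exp_add]; simp
  linear_combination (c^2*(lam^2+lam) - 2*c*r*lam + r^2) * he


theorem stmt_18 (l L lam r : ℝ) (hl : 0 < l) (hlL : l ≤ L)
    (h1 : l ≤ lam) (h2 : lam ≤ L) (h3 : l ≤ lam + r) (h4 : |r| / lam ≤ 1 / 2) :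
    ∑' k : ℕ, (Real.exp (-lam) * lam ^ k / (Nat.factorial k : ℝ)) *
      ((k : ℝ) * Real.log ((lam + r) / lam) - r) ^ 2
    ≤ (25 / 16) * r ^ 2 / l + r ^ 4 / (4 * l ^ 2) := by
  have hlam : 0 < lam := lt_of_lt_of_le hl h1
  have hsumr : 0 < lam + r := lt_of_lt_of_le hl h3
  rw [poisson_sq lam (Real.log ((lam + r) / lam)) r]
  have he : (lam + r) / lam = 1 + r / lam := by field_simp
  set c := Real.log ((lam + r) / lam) with hcdef
  have hc : c = Real.log (1 + r / lam) := by rw [hcdef, he]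
  set x := r / lam with hxdef
  have hx1 : (0:ℝ) < 1 + x := by
    rw [hxdef, ← he]; positivity
  have hlx : lam * (1 + x) = lam + r := by
    rw [hxdef]; field_simp
  have hx2 : x ^ 2 * lam ^ 2 = r ^ 2 := by rw [hxdef]; field_simp
  have hx4 : x ^ 4 * lam ^ 4 = r ^ 4 := by rw [hxdef]; field_simp
  have hclex : c ≤ x := by
    rw [hc]
    have := Real.log_le_sub_one_of_pos hx1
    linarith
  have partA : lam * c ^ 2 ≤ 25 / 16 * r ^ 2 / l := by
    rw [le_div_iff₀ hl]
    rcases le_or_gt 0 r with hr | hr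
    · have hx0 : 0 ≤ x := by rw [hxdef]; positivity
      have hc0 : 0 ≤ c := by
        rw [hc]; exact Real.log_nonneg (by linarith)
      have hc2 : c ^ 2 ≤ x ^ 2 := pow_le_pow_left₀ hc0 hclex 2
      calc lam * c ^ 2 * l ≤ lam * c ^ 2 * lam :=
            mul_le_mul_of_nonneg_left h1 (by positivity)
        _ ≤ lam * x ^ 2 * lam :=
            mul_le_mul_of_nonneg_right
              (mul_le_mul_of_nonneg_left hc2 hlam.le) hlam.le
        _ = r ^ 2 := by linear_combination hx2
        _ ≤ 25 / 16 * r ^ 2 := by nlinarith [sq_nonneg r]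
    · have hx0 : x ≤ 0 := by
        rw [hxdef]
        exact div_nonpos_of_nonpos_of_nonneg hr.le hlam.le
      have hphi := logPhi (show -1 < x by linarith) hx0
      rw [← hc] at hphi
      calc lam * c ^ 2 * l ≤ lam * c ^ 2 * (lam + r) :=
            mul_le_mul_of_nonneg_left h3 (by positivity)
        _ = lam ^ 2 * ((1 + x) * c ^ 2) := by rw [← hlx]; ring
        _ ≤ lam ^ 2 * (25 / 16 * x ^ 2) :=
            mul_le_mul_of_nonneg_left hphi (by positivity)
        _ = 25 / 16 * r ^ 2 := by linear_combination (25/16) * hx2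
  have partB : (lam * c - r) ^ 2 ≤ r ^ 4 / (4 * l ^ 2) := by
    rw [le_div_iff₀ (by positivity : (0:ℝ) < 4 * l ^ 2)]
    have hcr : lam * c - r = lam * (c - x) := by
      rw [hxdef]; field_simp
    rcases le_or_gt 0 r with hr | hr
    · have hx0 : 0 ≤ x := by rw [hxdef]; positivity
      have hA : x - x ^ 2 / 2 ≤ c := by rw [hc]; exact logA hx0
      have hsq : (x - c) ^ 2 ≤ (x ^ 2 / 2) ^ 2 :=
        pow_le_pow_left₀ (by linarith) (by linarith) 2
      have hll : l ^ 2 ≤ lam ^ 2 := pow_le_pow_left₀ hl.le h1 2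
      calc (lam * c - r) ^ 2 * (4 * l ^ 2)
          = (x - c) ^ 2 * (4 * l ^ 2 * lam ^ 2) := by rw [hcr]; ring
        _ ≤ (x ^ 2 / 2) ^ 2 * (4 * l ^ 2 * lam ^ 2) :=
            mul_le_mul_of_nonneg_right hsq (by positivity)
        _ = x ^ 4 * (l ^ 2 * lam ^ 2) := by ring
        _ ≤ x ^ 4 * (lam ^ 2 * lam ^ 2) := by
            apply mul_le_mul_of_nonneg_left _ (by positivity)
            nlinarith
        _ = r ^ 4 := by linear_combination hx4
    · have hx0 : x ≤ 0 := by
        rw [hxdef]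
        exact div_nonpos_of_nonpos_of_nonneg hr.le hlam.le
      have hB : x - c ≤ x ^ 2 / (2 * (1 + x)) := by
        rw [hc]; exact logB (by linarith) hx0
      have hsq : (x - c) ^ 2 ≤ (x ^ 2 / (2 * (1 + x))) ^ 2 :=
        pow_le_pow_left₀ (by linarith) hB 2
      have hlle : l ≤ lam * (1 + x) := by rw [hlx]; exact h3
      have hll : l ^ 2 ≤ (lam * (1 + x)) ^ 2 := pow_le_pow_left₀ hl.le hlle 2
      calc (lam * c - r) ^ 2 * (4 * l ^ 2)
          = (x - c) ^ 2 * (4 * l ^ 2 * lam ^ 2) := by rw [hcr]; ring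
        _ ≤ (x ^ 2 / (2 * (1 + x))) ^ 2 * (4 * l ^ 2 * lam ^ 2) :=
            mul_le_mul_of_nonneg_right hsq (by positivity)
        _ = x ^ 4 * l ^ 2 * lam ^ 2 / (1 + x) ^ 2 := by
            rw [div_pow, div_mul_eq_mul_div]
            rw [div_eq_div_iff (by positivity) (by positivity)]
            ring
        _ ≤ x ^ 4 * (lam * (1 + x)) ^ 2 * lam ^ 2 / (1 + x) ^ 2 := by
            gcongr
        _ = x ^ 4 * lam ^ 4 := by
            rw [div_eq_iff (by positivity : ((1:ℝ) + x) ^ 2 ≠ 0)]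
            ring
        _ = r ^ 4 := hx4
  linarith [partA, partB]
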